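/- Let X be a compact metric space and f : X → X continuous, with graph Γ(f) = {(x, f(x)) : x ∈ X}. Then the closed relation Γ(f) is CR-turbulent if and only if f is separated m-turbulent for some positive integer m. -/
import Mathlib


open Set

/-- The n-th Mahavier product of a relation `F` on `X`: tuples `(x 0, …, x n)`
with `(x i, x (i+1)) ∈ F` for all `i < n`. -/
def Mahavier {X : Type*} (F : Set (X × X)) (n : ℕ) : Set (Fin (n + 1) → X) :=
  {x | ∀ i : Fin n, (x i.castSucc, x i.succ) ∈ F}

/-- A witness of CR-turbulence at length parameter `n`. -/
def CRWitness {X : Type*} [TopologicalSpace X] (F : Set (X × X)) (n : ℕ) : Prop :=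
  ∃ K L : Set (Fin (n + 1) → X),
    K.Nonempty ∧ L.Nonempty ∧ IsClosed K ∧ IsClosed L ∧
    K ⊆ Mahavier F n ∧ L ⊆ Mahavier F n ∧ Disjoint K L ∧
    ((fun x => x 0) '' K ∪ (fun x => x 0) '' L) ⊆
      ((fun x => x (Fin.last n)) '' K ∩ (fun x => x (Fin.last n)) '' L)

/-- A witness of reverse CR-turbulence at length parameter `n`. -/
def RevCRWitness {X : Type*} [TopologicalSpace X] (F : Set (X × X)) (n : ℕ) : Prop :=
  ∃ K L : Set (Fin (n + 1) → X),
    K.Nonempty ∧ L.Nonempty ∧ IsClosed K ∧ IsClosed L ∧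
    K ⊆ Mahavier F n ∧ L ⊆ Mahavier F n ∧ Disjoint K L ∧
    ((fun x => x (Fin.last n)) '' K ∪ (fun x => x (Fin.last n)) '' L) ⊆
      ((fun x => x 0) '' K ∩ (fun x => x 0) '' L)

/-- `F` is CR-turbulent. -/
def CRTurbulent {X : Type*} [TopologicalSpace X] (F : Set (X × X)) : Prop :=
  ∃ n : ℕ, 1 ≤ n ∧ CRWitness F n

/-- `F` is reverse CR-turbulent. -/
def RevCRTurbulent {X : Type*} [TopologicalSpace X] (F : Set (X × X)) : Prop :=
  ∃ n : ℕ, 1 ≤ n ∧ RevCRWitness F n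

/-- A self-map is separated turbulent. -/
def SepTurbulent {Z : Type*} [TopologicalSpace Z] (h : Z → Z) : Prop :=
  ∃ K L : Set Z, K.Nonempty ∧ L.Nonempty ∧ IsClosed K ∧ IsClosed L ∧
    Disjoint K L ∧ K ∪ L ⊆ h '' K ∩ h '' L

/-- A self-map is turbulent. -/
def Turbulent {Z : Type*} [TopologicalSpace Z] (h : Z → Z) : Prop :=
  ∃ K L : Set Z, K.Nonempty ∧ L.Nonempty ∧ IsClosed K ∧ IsClosed L ∧
    (K ∩ L).Subsingleton ∧ K ∪ L ⊆ h '' K ∩ h '' L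

/-- The infinite Mahavier product `X_F^+`. -/
def MahavierSeq {X : Type*} (F : Set (X × X)) : Set (ℕ → X) :=
  {x | ∀ i : ℕ, (x i, x (i + 1)) ∈ F}

/-- The shift map `σ_F^+` on `X_F^+`. -/
def shiftMap {X : Type*} (F : Set (X × X)) : MahavierSeq F → MahavierSeq F :=
  fun x => ⟨fun n => x.1 (n + 1), fun i => x.2 (i + 1)⟩

/-- For a continuous `f : X → X` on a compact metric space, the closed
relation `Γ(f)` is CR-turbulent if and only if `f` is separated `m`-turbulent for some
positive integer `m`. -/
-- On the graph of `f`, every Mahavier tuple is the orbit of its first coordinate. -/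
lemma graph_eval {X : Type*} (f : X → X) {n : ℕ} {x : Fin (n+1) → X}
    (hx : x ∈ Mahavier {p : X × X | p.2 = f p.1} n) (i : Fin (n+1)) :
    x i = f^[i.1] (x 0) := by
  obtain ⟨k, hk⟩ := i
  induction k with
  | zero => rfl
  | succ k ih =>
    have hk' : k < n := Nat.lt_of_succ_lt_succ hk
    have h1 := hx ⟨k, hk'⟩
    simp only [Set.mem_setOf_eq] at h1
    have : x ⟨k+1, hk⟩ = f (x ⟨k, Nat.lt_of_succ_lt hk⟩) := h1
    rw [this, ih (Nat.lt_of_succ_lt hk), Function.iterate_succ_apply']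

theorem stmt3 {X : Type*} [MetricSpace X] [CompactSpace X] (f : X → X) (hf : Continuous f) :
    CRTurbulent {p : X × X | p.2 = f p.1} ↔ ∃ m : ℕ, 1 ≤ m ∧ SepTurbulent (f^[m]) := by
  constructor
  · rintro ⟨n, hn, K, L, hKne, hLne, hKc, hLc, hKM, hLM, hKL, hsub⟩
    refine ⟨n, hn, (fun x => x 0) '' K, (fun x => x 0) '' L, hKne.image _, hLne.image _,
      (hKc.isCompact.image (continuous_apply 0)).isClosed,
      (hLc.isCompact.image (continuous_apply 0)).isClosed, ?_, ?_⟩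
    · rw [Set.disjoint_left]
      rintro a ⟨x, hx, rfl⟩ ⟨y, hy, hy0⟩
      have hy0' : y 0 = x 0 := hy0
      have hxy : x = y := by
        funext i
        rw [graph_eval f (hKM hx) i, graph_eval f (hLM hy) i, hy0']
      exact Set.disjoint_left.mp hKL hx (hxy ▸ hy)
    · have himK : (fun x => x (Fin.last n)) '' K = f^[n] '' ((fun x => x 0) '' K) := by
        rw [Set.image_image]
        exact Set.image_congr fun x hx => by
          rw [graph_eval f (hKM hx) (Fin.last n), Fin.val_last]
      have himL : (fun x => x (Fin.last n)) '' L = f^[n] '' ((fun x => x 0) '' L) := by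
        rw [Set.image_image]
        exact Set.image_congr fun x hx => by
          rw [graph_eval f (hLM hx) (Fin.last n), Fin.val_last]
      rw [← himK, ← himL]
      exact hsub
  · rintro ⟨m, hm, K₀, L₀, hKne, hLne, hKc, hLc, hKL, hsub⟩
    set E : X → (Fin (m+1) → X) := fun a i => f^[i.1] a with hE
    have hEcont : Continuous E := continuous_pi fun i => hf.iterate i.1
    have hEM : ∀ a, E a ∈ Mahavier {p : X × X | p.2 = f p.1} m := by
      intro a i
      show f^[i.succ.1] a = f (f^[i.castSucc.1] a)
      rw [Fin.val_succ, Fin.coe_castSucc, Function.iterate_succ_apply']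
    have hE0 : ∀ a, E a 0 = a := fun a => rfl
    have hElast : ∀ a, E a (Fin.last m) = f^[m] a := fun a => rfl
    have him0 : ∀ S : Set X, (fun x => x 0) '' (E '' S) = S := by
      intro S; rw [Set.image_image]; simp [hE0]
    have himlast : ∀ S : Set X, (fun x => x (Fin.last m)) '' (E '' S) = f^[m] '' S := by
      intro S; rw [Set.image_image]; exact Set.image_congr fun a _ => hElast a
    refine ⟨m, hm, E '' K₀, E '' L₀, hKne.image _, hLne.image _,
      (hKc.isCompact.image hEcont).isClosed, (hLc.isCompact.image hEcont).isClosed,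
      ?_, ?_, ?_, ?_⟩
    · rintro x ⟨a, _, rfl⟩; exact hEM a
    · rintro x ⟨a, _, rfl⟩; exact hEM a
    · rw [Set.disjoint_left]
      rintro x ⟨a, ha, rfl⟩ ⟨b, hb, hb'⟩
      have : a = b := by rw [← hE0 a, ← hE0 b, hb']
      exact Set.disjoint_left.mp hKL ha (this ▸ hb)
    · rw [him0, him0, himlast, himlast]
      exact hsub
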